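/- arXiv:1808.02434 — 2 statements merged into one kernel-verified Lean document; each statement's English description precedes it below -/
import Mathlib

section
/- Let H be a real Hilbert space with orthonormal basis (φₙ), let (λₙ) be positive reals with λₙ → ∞, let 1 < α < 2, and let u₀ ∈ D(A^{1/α}) (i.e., ∑ₙ |(u₀,φₙ)|² λₙ^{2/α} < ∞). Assume |E_{α,1}(-x)| ≤ C₀/(1+x) for all x ≥ 0. Then the function S₁(t)u₀ := ∑ₙ (u₀,φₙ) E_{α,1}(-λₙ t^α) φₙ satisfies ‖S₁(t)u₀‖_{D(A^{1/α})} ≤ (C₀+1)‖u₀‖_{D(A^{1/α})} for all t ≥ 0, and ‖S₁(t)u₀ - u₀‖_{D(A^σ)} → 0 as t → 0⁺ for every 0 ≤ σ < 1/α. -/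
open Filter

/-- Two-parameter Mittag-Leffler function (real variable). -/
noncomputable def ml (a b z : ℝ) : ℝ := ∑' n : ℕ, z ^ n / Real.Gamma (a * n + b)


lemma factorial_le_Gamma {a : ℝ} (ha : 1 < a) (n : ℕ) :
    (n.factorial : ℝ) ≤ Real.Gamma (a * n + 1) := by
  rcases Nat.eq_zero_or_pos n with h0 | h0
  · subst h0; simp [Real.Gamma_one]
  · have hn1 : (1 : ℝ) ≤ (n : ℝ) := by exact_mod_cast h0
    have h1 : ((n : ℝ) + 1) ∈ Set.Ici (2:ℝ) := by
      simp only [Set.mem_Ici]; linarith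
    have h2 : (a * n + 1) ∈ Set.Ici (2:ℝ) := by
      have : (n : ℝ) ≤ a * n := le_mul_of_one_le_left (by linarith) ha.le
      simp only [Set.mem_Ici]; linarith
    have h3 : (n : ℝ) + 1 ≤ a * n + 1 := by
      have : (n : ℝ) ≤ a * n := le_mul_of_one_le_left (by linarith) ha.le
      linarith
    calc (n.factorial : ℝ) = Real.Gamma (n + 1) := (Real.Gamma_nat_eq_factorial n).symm
      _ ≤ Real.Gamma (a * n + 1) :=
        Real.Gamma_strictMonoOn_Ici.monotoneOn h1 h2 h3

lemma two_pow_le_factorial (k : ℕ) : 2 ^ k ≤ (k + 1).factorial := by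
  induction k with
  | zero => simp
  | succ k ih =>
      have h2 : 2 ≤ k + 2 := by omega
      calc 2 ^ (k + 1) = 2 * 2 ^ k := by ring
        _ ≤ 2 * (k + 1).factorial := by omega
        _ ≤ (k + 2) * (k + 1).factorial := Nat.mul_le_mul_right _ h2
        _ = (k + 2).factorial := rfl

lemma ml_summable {a : ℝ} (ha : 1 < a) {w : ℝ} (hw : |w| ≤ 1) :
    Summable (fun n : ℕ => w ^ n / Real.Gamma (a * n + 1)) := by
  apply Summable.of_norm_bounded (g := fun n : ℕ => ((n.factorial : ℕ) : ℝ)⁻¹)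
  · simpa using Real.summable_pow_div_factorial 1
  · intro n
    have hfac : (0:ℝ) < (n.factorial : ℝ) := by positivity
    have hG : (n.factorial : ℝ) ≤ Real.Gamma (a * n + 1) := factorial_le_Gamma ha n
    have hGpos : (0:ℝ) < Real.Gamma (a * n + 1) := lt_of_lt_of_le hfac hG
    have hwn : |w ^ n| ≤ 1 := by
      rw [abs_pow]; exact pow_le_one₀ (abs_nonneg w) hw
    rw [Real.norm_eq_abs, abs_div, abs_of_pos hGpos]
    calc |w ^ n| / Real.Gamma (a * n + 1) ≤ 1 / (n.factorial : ℝ) := by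
          exact div_le_div₀ zero_le_one hwn hfac hG
      _ = ((n.factorial : ℕ) : ℝ)⁻¹ := one_div _

lemma ml_near_one {a : ℝ} (ha : 1 < a) {z : ℝ} (hz0 : 0 ≤ z) (hz1 : z ≤ 1) :
    |ml a 1 (-z) - 1| ≤ 2 * z := by
  have hw : |(-z)| ≤ 1 := by rw [abs_neg, abs_of_nonneg hz0]; exact hz1
  set f : ℕ → ℝ := fun n => (-z) ^ n / Real.Gamma (a * n + 1) with hf
  have hsum : Summable f := ml_summable ha hw
  have hml : ml a 1 (-z) = f 0 + ∑' k, f (k + 1) := hsum.tsum_eq_zero_add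
  have h0 : f 0 = 1 := by simp [hf, Real.Gamma_one]
  have key : ml a 1 (-z) - 1 = ∑' k, f (k + 1) := by rw [hml, h0]; ring
  have hsum1 : Summable fun k => f (k + 1) := (summable_nat_add_iff 1).mpr hsum
  have habs : Summable fun k => |f (k + 1)| := summable_abs_iff.mpr hsum1
  have hgeo : Summable (fun k : ℕ => z * (1/2 : ℝ) ^ k) :=
    summable_geometric_two.mul_left z
  have hterm : ∀ k : ℕ, |f (k + 1)| ≤ z * (1/2 : ℝ) ^ k := by
    intro k
    have hG : (((k+1).factorial : ℕ) : ℝ) ≤ Real.Gamma (a * (k+1 : ℕ) + 1) :=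
      factorial_le_Gamma ha (k+1)
    have hfac : (0:ℝ) < (((k+1).factorial : ℕ) : ℝ) := by positivity
    have hGpos : (0:ℝ) < Real.Gamma (a * (k+1:ℕ) + 1) := lt_of_lt_of_le hfac hG
    have h2p : ((2:ℝ)) ^ k ≤ (((k+1).factorial : ℕ) : ℝ) := by
      exact_mod_cast two_pow_le_factorial k
    have hnum : |(-z) ^ (k+1)| ≤ z := by
      rw [abs_pow, abs_neg, abs_of_nonneg hz0, pow_succ]
      calc z ^ k * z ≤ 1 * z :=
            mul_le_mul_of_nonneg_right (pow_le_one₀ hz0 hz1) hz0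
        _ = z := one_mul z
    have : |f (k+1)| = |(-z) ^ (k+1)| / Real.Gamma (a * (k+1:ℕ) + 1) := by
      rw [hf]; rw [abs_div, abs_of_pos hGpos]
    rw [this]
    calc |(-z) ^ (k+1)| / Real.Gamma (a * (k+1:ℕ) + 1) ≤ z / (2:ℝ) ^ k :=
          div_le_div₀ hz0 hnum (by positivity) (le_trans h2p hG)
      _ = z * (1/2:ℝ) ^ k := by rw [div_pow, one_pow]; ring
  rw [key]
  calc |∑' k, f (k + 1)| ≤ ∑' k, |f (k + 1)| := by
        simpa [Real.norm_eq_abs] using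
          norm_tsum_le_tsum_norm (by simpa [Real.norm_eq_abs] using habs :
            Summable fun k => ‖f (k + 1)‖)
    _ ≤ ∑' k : ℕ, z * (1/2:ℝ) ^ k := Summable.tsum_le_tsum hterm habs hgeo
    _ = z * 2 := by rw [tsum_mul_left, tsum_geometric_two]
    _ = 2 * z := mul_comm z 2

/-- Spectral bound for `S₁(t)u₀ = ∑ₙ (u₀,φₙ) E_{α,1}(-λₙ t^α) φₙ` in the `D(A^{1/α})`
norm, and convergence `S₁(t)u₀ → u₀` in `D(A^σ)` as `t → 0⁺`, for `0 ≤ σ < 1/α`. -/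
theorem S1_bound_and_initial_value {H : Type*} [NormedAddCommGroup H]
    [InnerProductSpace ℝ H] (φ : ℕ → H) (hφ : Orthonormal ℝ φ) (lam : ℕ → ℝ)
    (hpos : ∀ n, 0 < lam n) (htend : Tendsto lam atTop atTop)
    (a C0 : ℝ) (h1 : 1 < a) (h2 : a < 2) (hC0 : 0 < C0)
    (hE : ∀ x ≥ (0:ℝ), |ml a 1 (-x)| ≤ C0 / (1 + x)) (u0 : H)
    (hu0 : Summable fun n => (inner ℝ u0 (φ n) : ℝ) ^ 2 * lam n ^ (2 / a)) :
    (∀ t ≥ (0:ℝ),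
      Summable (fun n => ((inner ℝ u0 (φ n) : ℝ) * ml a 1 (-(lam n * t ^ a))) ^ 2
          * lam n ^ (2 / a)) ∧
      (∑' n, ((inner ℝ u0 (φ n) : ℝ) * ml a 1 (-(lam n * t ^ a))) ^ 2
          * lam n ^ (2 / a)) ^ ((1:ℝ)/2) ≤
        (C0 + 1) * (∑' n, (inner ℝ u0 (φ n) : ℝ) ^ 2 * lam n ^ (2 / a)) ^ ((1:ℝ)/2)) ∧
    ∀ σ : ℝ, 0 ≤ σ → σ < 1 / a →
      Tendsto (fun t : ℝ =>
          (∑' n, ((inner ℝ u0 (φ n) : ℝ) * (ml a 1 (-(lam n * t ^ a)) - 1)) ^ 2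
            * lam n ^ (2 * σ)) ^ ((1:ℝ)/2))
        (nhdsWithin 0 (Set.Ioi 0)) (nhds 0) := by
  constructor
  · intro t ht
    have hx : ∀ n, 0 ≤ lam n * t ^ a := fun n =>
      mul_nonneg (hpos n).le (Real.rpow_nonneg ht a)
    have hEb : ∀ n, |ml a 1 (-(lam n * t ^ a))| ≤ C0 + 1 := by
      intro n
      have h := hE _ (hx n)
      have h' : C0 / (1 + lam n * t ^ a) ≤ C0 := div_le_self hC0.le (by linarith [hx n])
      linarith
    have key : ∀ n, ((inner ℝ u0 (φ n) : ℝ) * ml a 1 (-(lam n * t ^ a))) ^ 2 * lam n ^ (2 / a)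
        ≤ (C0 + 1) ^ 2 * ((inner ℝ u0 (φ n) : ℝ) ^ 2 * lam n ^ (2 / a)) := by
      intro n
      have hml2 : (ml a 1 (-(lam n * t ^ a))) ^ 2 ≤ (C0 + 1) ^ 2 := by
        rw [← sq_abs]
        exact pow_le_pow_left₀ (abs_nonneg _) (hEb n) 2
      have hlnn : (0:ℝ) ≤ lam n ^ (2 / a) := Real.rpow_nonneg (hpos n).le _
      have hmm : ((inner ℝ u0 (φ n) : ℝ) * ml a 1 (-(lam n * t ^ a))) ^ 2
          ≤ (inner ℝ u0 (φ n) : ℝ) ^ 2 * (C0 + 1) ^ 2 := by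
        rw [mul_pow]
        exact mul_le_mul_of_nonneg_left hml2 (sq_nonneg _)
      calc ((inner ℝ u0 (φ n) : ℝ) * ml a 1 (-(lam n * t ^ a))) ^ 2 * lam n ^ (2 / a)
          ≤ ((inner ℝ u0 (φ n) : ℝ) ^ 2 * (C0 + 1) ^ 2) * lam n ^ (2 / a) :=
            mul_le_mul_of_nonneg_right hmm hlnn
        _ = (C0 + 1) ^ 2 * ((inner ℝ u0 (φ n) : ℝ) ^ 2 * lam n ^ (2 / a)) := by ring
    have hsummable : Summable (fun n => ((inner ℝ u0 (φ n) : ℝ) * ml a 1 (-(lam n * t ^ a))) ^ 2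
        * lam n ^ (2 / a)) := by
      apply Summable.of_nonneg_of_le
        (fun n => mul_nonneg (sq_nonneg _) (Real.rpow_nonneg (hpos n).le _)) key
      exact hu0.mul_left _
    refine ⟨hsummable, ?_⟩
    have htsum : (∑' n, ((inner ℝ u0 (φ n) : ℝ) * ml a 1 (-(lam n * t ^ a))) ^ 2
        * lam n ^ (2 / a)) ≤ (C0 + 1) ^ 2 * ∑' n, (inner ℝ u0 (φ n) : ℝ) ^ 2 * lam n ^ (2 / a) := by
      calc (∑' n, ((inner ℝ u0 (φ n) : ℝ) * ml a 1 (-(lam n * t ^ a))) ^ 2 * lam n ^ (2 / a))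
          ≤ ∑' n, (C0 + 1) ^ 2 * ((inner ℝ u0 (φ n) : ℝ) ^ 2 * lam n ^ (2 / a)) :=
            Summable.tsum_le_tsum key hsummable (hu0.mul_left _)
        _ = (C0 + 1) ^ 2 * ∑' n, (inner ℝ u0 (φ n) : ℝ) ^ 2 * lam n ^ (2 / a) := tsum_mul_left
    rw [← Real.sqrt_eq_rpow, ← Real.sqrt_eq_rpow]
    calc Real.sqrt (∑' n, ((inner ℝ u0 (φ n) : ℝ) * ml a 1 (-(lam n * t ^ a))) ^ 2
        * lam n ^ (2 / a))
        ≤ Real.sqrt ((C0 + 1) ^ 2 * ∑' n, (inner ℝ u0 (φ n) : ℝ) ^ 2 * lam n ^ (2 / a)) :=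
          Real.sqrt_le_sqrt htsum
      _ = (C0 + 1) * Real.sqrt (∑' n, (inner ℝ u0 (φ n) : ℝ) ^ 2 * lam n ^ (2 / a)) := by
          rw [Real.sqrt_mul (sq_nonneg _), Real.sqrt_sq (by positivity : (0:ℝ) ≤ C0 + 1)]
  · intro σ hσ0 hσa
    have hu2 : Summable fun n => (inner ℝ u0 (φ n) : ℝ) ^ 2 := by
      have h := hφ.inner_products_summable (x := u0)
      refine h.congr fun n => ?_
      rw [real_inner_comm, Real.norm_eq_abs, sq_abs]
    have hbound_sum : Summable (fun n =>
        (C0 + 1) ^ 2 * ((inner ℝ u0 (φ n) : ℝ) ^ 2 * (1 + lam n ^ (2 / a)))) := by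
      apply Summable.mul_left
      have heq : (fun n => (inner ℝ u0 (φ n) : ℝ) ^ 2 * (1 + lam n ^ (2 / a)))
          = fun n => (inner ℝ u0 (φ n) : ℝ) ^ 2 + (inner ℝ u0 (φ n) : ℝ) ^ 2 * lam n ^ (2 / a) := by
        funext n; ring
      rw [heq]
      exact hu2.add hu0
    have hlam : ∀ n, lam n ^ (2 * σ) ≤ 1 + lam n ^ (2 / a) := by
      intro n
      rcases le_or_gt 1 (lam n) with h | h
      · have hexp : 2 * σ ≤ 2 / a := by
          rw [show (2:ℝ)/a = 2 * (1/a) by ring]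
          linarith
        have h' := Real.rpow_le_rpow_of_exponent_le h hexp
        linarith
      · have hA : lam n ^ (2 * σ) ≤ 1 := Real.rpow_le_one (hpos n).le h.le (by linarith)
        have hB : 0 ≤ lam n ^ (2 / a) := Real.rpow_nonneg (hpos n).le _
        linarith
    have hptE : ∀ n, Tendsto (fun t : ℝ => ml a 1 (-(lam n * t ^ a)) - 1)
        (nhdsWithin 0 (Set.Ioi 0)) (nhds 0) := by
      intro n
      have hta : Tendsto (fun t : ℝ => t ^ a) (nhdsWithin 0 (Set.Ioi 0)) (nhds 0) := by
        have hc : ContinuousAt (fun t : ℝ => t ^ a) 0 :=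
          Real.continuousAt_rpow_const 0 a (Or.inr (by linarith))
        have h' := hc.tendsto
        rw [Real.zero_rpow (by linarith : a ≠ 0)] at h'
        exact h'.mono_left nhdsWithin_le_nhds
      have hx : Tendsto (fun t : ℝ => lam n * t ^ a) (nhdsWithin 0 (Set.Ioi 0)) (nhds 0) := by
        have := hta.const_mul (lam n)
        simpa using this
      have h01 : ∀ᶠ t : ℝ in nhdsWithin 0 (Set.Ioi 0),
          0 ≤ lam n * t ^ a ∧ lam n * t ^ a ≤ 1 := by
        filter_upwards [self_mem_nhdsWithin, hx.eventually_lt_const (zero_lt_one)] with t ht h1t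
        exact ⟨mul_nonneg (hpos n).le (Real.rpow_nonneg (le_of_lt ht) a), h1t.le⟩
      have h2x : Tendsto (fun t : ℝ => 2 * (lam n * t ^ a))
          (nhdsWithin 0 (Set.Ioi 0)) (nhds 0) := by simpa using hx.const_mul 2
      have hneg : Tendsto (fun t : ℝ => -(2 * (lam n * t ^ a)))
          (nhdsWithin 0 (Set.Ioi 0)) (nhds 0) := by simpa using h2x.neg
      apply tendsto_of_tendsto_of_tendsto_of_le_of_le' hneg h2x
      · filter_upwards [h01] with t ht
        exact (abs_le.mp (ml_near_one h1 ht.1 ht.2)).1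
      · filter_upwards [h01] with t ht
        exact (abs_le.mp (ml_near_one h1 ht.1 ht.2)).2
    have hpt : ∀ n, Tendsto (fun t : ℝ =>
        ((inner ℝ u0 (φ n) : ℝ) * (ml a 1 (-(lam n * t ^ a)) - 1)) ^ 2 * lam n ^ (2 * σ))
        (nhdsWithin 0 (Set.Ioi 0)) (nhds 0) := by
      intro n
      have := (((hptE n).const_mul ((inner ℝ u0 (φ n) : ℝ))).pow 2).mul_const (lam n ^ (2 * σ))
      simpa using this
    have hb : ∀ᶠ t : ℝ in nhdsWithin 0 (Set.Ioi 0), ∀ n,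
        ‖((inner ℝ u0 (φ n) : ℝ) * (ml a 1 (-(lam n * t ^ a)) - 1)) ^ 2 * lam n ^ (2 * σ)‖
        ≤ (C0 + 1) ^ 2 * ((inner ℝ u0 (φ n) : ℝ) ^ 2 * (1 + lam n ^ (2 / a))) := by
      filter_upwards [self_mem_nhdsWithin] with t ht n
      have hx0 : 0 ≤ lam n * t ^ a :=
        mul_nonneg (hpos n).le (Real.rpow_nonneg (le_of_lt ht) a)
      have hE1 : |ml a 1 (-(lam n * t ^ a)) - 1| ≤ C0 + 1 := by
        have h := hE _ hx0
        have h' : C0 / (1 + lam n * t ^ a) ≤ C0 := div_le_self hC0.le (by linarith)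
        calc |ml a 1 (-(lam n * t ^ a)) - 1|
            ≤ |ml a 1 (-(lam n * t ^ a))| + |(-1 : ℝ)| := by
              rw [sub_eq_add_neg]; exact abs_add_le _ _
          _ ≤ C0 + 1 := by rw [abs_neg, abs_one]; linarith
      have h2 : (ml a 1 (-(lam n * t ^ a)) - 1) ^ 2 ≤ (C0 + 1) ^ 2 := by
        rw [← sq_abs]
        exact pow_le_pow_left₀ (abs_nonneg _) hE1 2
      have hlsig : (0:ℝ) ≤ lam n ^ (2 * σ) := Real.rpow_nonneg (hpos n).le _
      rw [Real.norm_eq_abs, abs_of_nonneg (mul_nonneg (sq_nonneg _) hlsig)]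
      calc ((inner ℝ u0 (φ n) : ℝ) * (ml a 1 (-(lam n * t ^ a)) - 1)) ^ 2 * lam n ^ (2 * σ)
          ≤ ((inner ℝ u0 (φ n) : ℝ) ^ 2 * (C0 + 1) ^ 2) * lam n ^ (2 * σ) := by
            apply mul_le_mul_of_nonneg_right _ hlsig
            rw [mul_pow]
            exact mul_le_mul_of_nonneg_left h2 (sq_nonneg _)
        _ ≤ ((inner ℝ u0 (φ n) : ℝ) ^ 2 * (C0 + 1) ^ 2) * (1 + lam n ^ (2 / a)) :=
            mul_le_mul_of_nonneg_left (hlam n) (by positivity)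
        _ = (C0 + 1) ^ 2 * ((inner ℝ u0 (φ n) : ℝ) ^ 2 * (1 + lam n ^ (2 / a))) := by ring
    have hDCT := tendsto_tsum_of_dominated_convergence hbound_sum hpt hb
    rw [tsum_zero] at hDCT
    have hc : ContinuousAt (fun x : ℝ => x ^ ((1:ℝ)/2)) 0 :=
      Real.continuousAt_rpow_const 0 _ (Or.inr (by norm_num))
    have hcomp := hc.tendsto.comp hDCT
    rw [Real.zero_rpow (by norm_num : ((1:ℝ)/2) ≠ 0)] at hcomp
    exact hcomp
end

section
/- Let H be a real Hilbert space with orthonormal basis (φₙ), (λₙ) positive reals tending to ∞, 1 < α < 2, γ = 1/α, and u₁ ∈ H. Assume |E_{α,2}(-x)| ≤ C₀/(1+x) for all x ≥ 0. Then S₂(t)u₁ := ∑ₙ (u₁,φₙ) t E_{α,2}(-λₙ t^α) φₙ lies in D(A^γ) for every t > 0 and there is a constant C > 0 (depending only on α and C₀) such that ‖S₂(t)u₁‖_{D(A^γ)} ≤ C ‖u₁‖_H for all t > 0. -/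
open Filter

/-- `S₂(t)u₁ = ∑ₙ (u₁,φₙ) t E_{α,2}(-λₙ t^α) φₙ` lies in `D(A^γ)` (γ = 1/α) for every
`t > 0`, with `‖S₂(t)u₁‖_{D(A^γ)} ≤ C ‖u₁‖` for a constant depending only on α, C₀. -/
theorem S2_bound {H : Type*} [NormedAddCommGroup H] [InnerProductSpace ℝ H]
    (φ : ℕ → H) (hφ : Orthonormal ℝ φ) (lam : ℕ → ℝ)
    (hpos : ∀ n, 0 < lam n) (htend : Tendsto lam atTop atTop)
    (a C0 : ℝ) (h1 : 1 < a) (h2 : a < 2) (hC0 : 0 < C0)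
    (hE : ∀ x ≥ (0:ℝ), |ml a 2 (-x)| ≤ C0 / (1 + x)) (u1 : H) :
    ∃ C > 0, ∀ t > (0:ℝ),
      Summable (fun n => ((inner ℝ u1 (φ n) : ℝ) * t * ml a 2 (-(lam n * t ^ a))) ^ 2
          * lam n ^ (2 / a)) ∧
      (∑' n, ((inner ℝ u1 (φ n) : ℝ) * t * ml a 2 (-(lam n * t ^ a))) ^ 2
          * lam n ^ (2 / a)) ^ ((1:ℝ)/2) ≤ C * ‖u1‖ := by
  have ha0 : (0:ℝ) < a := lt_trans one_pos h1
  refine ⟨C0, hC0, fun t ht => ?_⟩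
  -- pointwise bound
  have hkey : ∀ n, ((inner ℝ u1 (φ n) : ℝ) * t * ml a 2 (-(lam n * t ^ a))) ^ 2
      * lam n ^ (2 / a) ≤ C0 ^ 2 * (inner ℝ u1 (φ n) : ℝ) ^ 2 := by
    intro n
    set c := (inner ℝ u1 (φ n) : ℝ) with hc
    set x := lam n * t ^ a with hxdef
    have hx0 : 0 ≤ x := by
      have := (hpos n).le
      have : 0 ≤ t ^ a := Real.rpow_nonneg ht.le a
      positivity
    have hpow : lam n ^ (2 / a) = (lam n ^ (1 / a)) ^ 2 := by
      rw [← Real.rpow_natCast (lam n ^ (1 / a)) 2, ← Real.rpow_mul (hpos n).le]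
      congr 1; push_cast; ring
    have hlt : lam n ^ (1 / a) * t = x ^ (1 / a) := by
      rw [hxdef, Real.mul_rpow (hpos n).le (Real.rpow_nonneg ht.le a),
        ← Real.rpow_mul ht.le, mul_one_div, div_self ha0.ne', Real.rpow_one]
    have hxle : x ^ (1 / a) ≤ 1 + x := by
      rcases le_or_gt x 1 with hx1 | hx1
      · have : x ^ (1 / a) ≤ 1 := Real.rpow_le_one hx0 hx1 (by positivity)
        linarith
      · have : x ^ (1 / a) ≤ x ^ (1:ℝ) :=
          Real.rpow_le_rpow_of_exponent_le hx1.le (by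
            rw [div_le_one ha0]; linarith)
        rw [Real.rpow_one] at this
        linarith
    have hEb : |ml a 2 (-x)| ≤ C0 / (1 + x) := hE x hx0
    have hfac : |lam n ^ (1 / a) * t * ml a 2 (-x)| ≤ C0 := by
      rw [abs_mul, abs_of_nonneg (mul_nonneg (Real.rpow_nonneg (hpos n).le _) ht.le), hlt]
      calc x ^ (1 / a) * |ml a 2 (-x)| ≤ (1 + x) * (C0 / (1 + x)) := by
            apply mul_le_mul hxle hEb (abs_nonneg _) (by linarith)
        _ = C0 := by field_simp
    have habs : |c * t * ml a 2 (-x) * lam n ^ (1 / a)| ≤ |c| * C0 := by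
      have : c * t * ml a 2 (-x) * lam n ^ (1 / a)
          = c * (lam n ^ (1 / a) * t * ml a 2 (-x)) := by ring
      rw [this, abs_mul]
      exact mul_le_mul_of_nonneg_left hfac (abs_nonneg _)
    calc (c * t * ml a 2 (-x)) ^ 2 * lam n ^ (2 / a)
        = (c * t * ml a 2 (-x) * lam n ^ (1 / a)) ^ 2 := by rw [hpow]; ring
      _ = |c * t * ml a 2 (-x) * lam n ^ (1 / a)| ^ 2 := (sq_abs _).symm
      _ ≤ (|c| * C0) ^ 2 := by
          apply pow_le_pow_left₀ (abs_nonneg _) habs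
      _ = C0 ^ 2 * c ^ 2 := by rw [mul_pow, sq_abs]; ring
  have hnn : ∀ n, 0 ≤ ((inner ℝ u1 (φ n) : ℝ) * t * ml a 2 (-(lam n * t ^ a))) ^ 2
      * lam n ^ (2 / a) := fun n => mul_nonneg (sq_nonneg _) (Real.rpow_nonneg (hpos n).le _)
  have hsum2 : Summable fun n => C0 ^ 2 * (inner ℝ u1 (φ n) : ℝ) ^ 2 := by
    have h := (hφ.inner_products_summable (x := u1)).mul_left (C0 ^ 2)
    refine h.congr fun n => ?_
    rw [Real.norm_eq_abs, sq_abs, real_inner_comm]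
  have hs : Summable (fun n => ((inner ℝ u1 (φ n) : ℝ) * t * ml a 2 (-(lam n * t ^ a))) ^ 2
      * lam n ^ (2 / a)) := Summable.of_nonneg_of_le hnn hkey hsum2
  refine ⟨hs, ?_⟩
  have htsum : (∑' n, ((inner ℝ u1 (φ n) : ℝ) * t * ml a 2 (-(lam n * t ^ a))) ^ 2
      * lam n ^ (2 / a)) ≤ C0 ^ 2 * ‖u1‖ ^ 2 := by
    calc (∑' n, ((inner ℝ u1 (φ n) : ℝ) * t * ml a 2 (-(lam n * t ^ a))) ^ 2
        * lam n ^ (2 / a)) ≤ ∑' n, C0 ^ 2 * (inner ℝ u1 (φ n) : ℝ) ^ 2 :=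
          Summable.tsum_le_tsum hkey hs hsum2
      _ = C0 ^ 2 * ∑' n, (inner ℝ u1 (φ n) : ℝ) ^ 2 := tsum_mul_left
      _ ≤ C0 ^ 2 * ‖u1‖ ^ 2 := by
          apply mul_le_mul_of_nonneg_left _ (by positivity)
          have h := hφ.tsum_inner_products_le u1
          calc (∑' n, (inner ℝ u1 (φ n) : ℝ) ^ 2)
              = ∑' n, ‖(inner ℝ (φ n) u1 : ℝ)‖ ^ 2 := by
                congr 1; funext n; rw [Real.norm_eq_abs, sq_abs, real_inner_comm]
            _ ≤ ‖u1‖ ^ 2 := h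
  have hC0u : C0 * ‖u1‖ = ((C0 ^ 2 * ‖u1‖ ^ 2) : ℝ) ^ ((1:ℝ)/2) := by
    rw [show C0 ^ 2 * ‖u1‖ ^ 2 = (C0 * ‖u1‖) ^ 2 by ring,
      ← Real.rpow_natCast (C0 * ‖u1‖) 2, ← Real.rpow_mul (by positivity)]
    norm_num
  rw [hC0u]
  exact Real.rpow_le_rpow (tsum_nonneg hnn) htsum (by norm_num)
end
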